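/- Let α > 0, β ≠ 0 and δ < 0. Then the polynomial p(λ) = λ⁴ + ((α + 1)β² + δ)/(αβ²) λ² + δ/(αβ²) has a real root λ > 0; hence the linearization matrix A = JĤ of the two-mass spring system at its equilibrium has a real strictly positive eigenvalue, and the equilibrium is linearly unstable. -/

import Mathlib

open Polynomial

lemma charpoly_eval_aux (α β δ : ℝ) (hα : 0 < α) (hβ : β ≠ 0) (x : ℝ) :
    ((!![0, 0, 1, 0; 0, 0, 0, 1; -1, 0, 0, 0; 0, -1, 0, 0] : Matrix (Fin 4) (Fin 4) ℝ) *
      !![β ^ 2 + δ, -β, 0, 0; -β, 1, 0, 0; 0, 0, 1 / (α * β ^ 2), 0; 0, 0, 0, 1]).charpoly.eval x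
      = x ^ 4 + ((α + 1) * β ^ 2 + δ) / (α * β ^ 2) * x ^ 2 + δ / (α * β ^ 2) := by
  rw [Matrix.charpoly, ← Polynomial.coe_evalRingHom, RingHom.map_det]
  rw [show ((evalRingHom x).mapMatrix (Matrix.charmatrix _)) =
    !![x, 0, -(1/(α*β^2)), 0; 0, x, 0, -1; β^2+δ, -β, x, 0; -β, 1, 0, x] from ?_]
  · simp [Matrix.det_succ_row_zero, Fin.sum_univ_succ, Fin.succAbove, Matrix.vecHead,
      Matrix.vecTail]
    have h1 : α * β ^ 2 ≠ 0 := by positivity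
    field_simp
    ring
  · ext i j
    fin_cases i <;> fin_cases j <;>
      simp [Matrix.charmatrix_apply, Matrix.mul_apply, Fin.sum_univ_four, Matrix.one_apply,
        Matrix.vecHead, Matrix.vecTail] <;> ring

/-- For `δ < 0` the characteristic polynomial
`p(λ) = λ⁴ + ((α+1)β² + δ)/(αβ²) λ² + δ/(αβ²)` has a real root `λ > 0`; hence the
linearization matrix `A = JĤ` has a real strictly positive eigenvalue (the equilibrium is
linearly unstable). -/
theorem unstable_for_delta_neg (α β δ : ℝ) (hα : 0 < α) (hβ : β ≠ 0) (hδ : δ < 0)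
    (Hhat J : Matrix (Fin 4) (Fin 4) ℝ)
    (hHhat : Hhat = !![β ^ 2 + δ, -β, 0, 0;
                       -β, 1, 0, 0;
                       0, 0, 1 / (α * β ^ 2), 0;
                       0, 0, 0, 1])
    (hJ : J = !![0, 0, 1, 0;
                 0, 0, 0, 1;
                 -1, 0, 0, 0;
                 0, -1, 0, 0]) :
    ∃ lam : ℝ, 0 < lam ∧
      lam ^ 4 + ((α + 1) * β ^ 2 + δ) / (α * β ^ 2) * lam ^ 2 + δ / (α * β ^ 2) = 0 ∧
      (J * Hhat).charpoly.IsRoot lam := by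
  have hab : α * β ^ 2 ≠ 0 := by positivity
  set b : ℝ := ((α + 1) * β ^ 2 + δ) / (α * β ^ 2) with hb
  set c : ℝ := δ / (α * β ^ 2) with hc
  have hcneg : c < 0 := div_neg_of_neg_of_pos hδ (by positivity)
  have hdisc : b ^ 2 < b ^ 2 - 4 * c := by linarith
  set s : ℝ := Real.sqrt (b ^ 2 - 4 * c) with hs
  have hs2 : s ^ 2 = b ^ 2 - 4 * c := Real.sq_sqrt (by nlinarith [sq_nonneg b])
  have hsb : |b| < s := by
    have h0 : 0 ≤ s := Real.sqrt_nonneg _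
    nlinarith [sq_abs b]
  have hb' : -s < b ∧ b < s := abs_lt.mp hsb
  set y : ℝ := (-b + s) / 2 with hy
  have hypos : 0 < y := by rw [hy]; linarith [hb'.2]
  have hyroot : y ^ 2 + b * y + c = 0 := by rw [hy]; nlinarith [hs2]
  set lam : ℝ := Real.sqrt y with hlam
  have hlampos : 0 < lam := Real.sqrt_pos.mpr hypos
  have hlam2 : lam ^ 2 = y := Real.sq_sqrt hypos.le
  have hquart : lam ^ 4 + b * lam ^ 2 + c = 0 := by
    have h4 : lam ^ 4 = y ^ 2 := by rw [show lam ^ 4 = (lam ^ 2) ^ 2 by ring, hlam2]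
    rw [h4, hlam2]; exact hyroot
  refine ⟨lam, hlampos, hquart, ?_⟩
  have key := charpoly_eval_aux α β δ hα hβ lam
  rw [hHhat, hJ]
  exact key.trans hquart
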